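/- Let w : [t₀,∞) → ℝ_{≥0} be right-continuous and piecewise absolutely continuous with discontinuities only at a strictly increasing sequence of times τ_1 < τ_2 < ... (tending to ∞ if infinite). Suppose ẇ(t) ≤ λ(t)·w(t) for almost all t not in the sequence, where λ is piecewise constant and bounded, and w(τ_k) ≤ r_k·w(τ_k⁻) with r_k > 0 at each event time. Then for all t ≥ t₀: w(t) ≤ (∏_{τ_k ∈ (t₀,t]} r_k) · exp(∫_{t₀}^{t} λ(s) ds) · w(t₀). -/

import Mathlib

open Filter MeasureTheory Topology

/-- Grönwall on an interval where `w` is positive, via `log`. -/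
lemma gron_pos (w w' lam : ℝ → ℝ) (a b : ℝ) (hab : a ≤ b)
    (hcont : ContinuousOn w (Set.Icc a b))
    (hpos : ∀ x ∈ Set.Icc a b, 0 < w x)
    (hd : ∀ x ∈ Set.Ioo a b, HasDerivAt w (w' x) x)
    (hf : ∀ x ∈ Set.Ioo a b, w' x ≤ lam x * w x)
    (hint : IntervalIntegrable lam volume a b) :
    w b ≤ Real.exp (∫ s in a..b, lam s) * w a := by
  have hlog : ∀ x ∈ Set.Ioo a b,
      HasDerivWithinAt (fun y => Real.log (w y)) ((w x)⁻¹ * w' x) (Set.Ioi x) x := by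
    intro x hx
    have hne : w x ≠ 0 := (hpos x (Set.Ioo_subset_Icc_self hx)).ne'
    exact ((Real.hasDerivAt_log hne).comp x (hd x hx)).hasDerivWithinAt
  have hφg : ∀ x ∈ Set.Ioo a b, (w x)⁻¹ * w' x ≤ lam x := by
    intro x hx
    have hx' := hpos x (Set.Ioo_subset_Icc_self hx)
    calc (w x)⁻¹ * w' x ≤ (w x)⁻¹ * (lam x * w x) :=
          mul_le_mul_of_nonneg_left (hf x hx) (inv_nonneg.2 hx'.le)
      _ = lam x := by
          rw [mul_comm (lam x), ← mul_assoc, inv_mul_cancel₀ hx'.ne', one_mul]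
  have hle : Real.log (w b) - Real.log (w a) ≤ ∫ y in a..b, lam y :=
    intervalIntegral.sub_le_integral_of_hasDeriv_right_of_le hab
      (hcont.log fun x hx => (hpos x hx).ne')
      hlog ((integrableOn_Icc_iff_integrableOn_Ioc).2 hint.1) hφg
  have h2 : Real.log (w b) ≤ (∫ y in a..b, lam y) + Real.log (w a) := by linarith
  have h3 := Real.exp_le_exp.2 h2
  rwa [Real.exp_add, Real.exp_log (hpos b ⟨hab, le_rfl⟩),
    Real.exp_log (hpos a ⟨le_rfl, hab⟩)] at h3

/-- Grönwall on an event-free interval, allowing `w` to vanish. -/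
lemma gronA (w w' lam : ℝ → ℝ) (t₀ : ℝ) (τ : ℕ → ℝ)
    (hw0 : ∀ t, t₀ ≤ t → 0 ≤ w t)
    (hrc : ∀ t, ContinuousWithinAt w (Set.Ici t) t)
    (hderiv : ∀ t, t₀ ≤ t → t ∉ Set.range τ → HasDerivAt w (w' t) t)
    (hflow : ∀ t, t₀ ≤ t → t ∉ Set.range τ → w' t ≤ lam t * w t)
    (hint' : ∀ a b : ℝ, IntervalIntegrable lam volume a b)
    (a b : ℝ) (ha : t₀ ≤ a) (hab : a ≤ b)
    (hne : ∀ s ∈ Set.Ioc a b, s ∉ Set.range τ) :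
    w b ≤ Real.exp (∫ s in a..b, lam s) * w a := by
  rcases eq_or_lt_of_le hab with rfl | hab'
  · simp
  have hd : ∀ x ∈ Set.Ioo a b, HasDerivAt w (w' x) x := fun x hx =>
    hderiv x (ha.trans hx.1.le) (hne x ⟨hx.1, hx.2.le⟩)
  have hf : ∀ x ∈ Set.Ioo a b, w' x ≤ lam x * w x := fun x hx =>
    hflow x (ha.trans hx.1.le) (hne x ⟨hx.1, hx.2.le⟩)
  have hcont : ContinuousOn w (Set.Icc a b) := by
    intro x hx
    rcases eq_or_lt_of_le hx.1 with rfl | hax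
    · exact (hrc _).mono Set.Icc_subset_Ici_self
    · exact ((hderiv x (ha.trans hax.le) (hne x ⟨hax, hx.2⟩)).continuousAt).continuousWithinAt
  by_cases hz : ∀ x ∈ Set.Icc a b, 0 < w x
  · exact gron_pos w w' lam a b hab hcont hz hd hf (hint' a b)
  · push_neg at hz
    obtain ⟨x₀, hx₀m, hx₀⟩ := hz
    have hRHS : 0 ≤ Real.exp (∫ s in a..b, lam s) * w a :=
      mul_nonneg (Real.exp_pos _).le (hw0 a ha)
    set Z := Set.Icc a b ∩ w ⁻¹' Set.Iic 0 with hZ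
    have hZne : Z.Nonempty := ⟨x₀, hx₀m, hx₀⟩
    have hZcl : IsClosed Z :=
      hcont.preimage_isClosed_of_isClosed isClosed_Icc isClosed_Iic
    have hZbdd : BddAbove Z := (bddAbove_Icc).mono Set.inter_subset_left
    have hcZ : sSup Z ∈ Z := hZcl.csSup_mem hZne hZbdd
    set c := sSup Z with hc
    have hcIcc : c ∈ Set.Icc a b := hcZ.1
    have hwc : w c = 0 := le_antisymm hcZ.2 (hw0 c (ha.trans hcIcc.1))
    rcases eq_or_lt_of_le hcIcc.2 with hcb | hcb
    · have hwb : w b = 0 := by rw [← hcb]; exact hwc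
      rw [hwb]; exact hRHS
    · -- c < b : show w b ≤ 0
      have hposIoo : ∀ s ∈ Set.Ioo c b, ∀ x ∈ Set.Icc s b, 0 < w x := by
        intro s hs x hx
        have hxab : x ∈ Set.Icc a b := ⟨hcIcc.1.trans (hs.1.le.trans hx.1), hx.2⟩
        by_contra hcon
        push_neg at hcon
        have : x ∈ Z := ⟨hxab, hcon⟩
        have : x ≤ c := le_csSup hZbdd this
        exact absurd (hs.1.trans_le hx.1) (not_lt.2 this)
      have hbound : ∀ s ∈ Set.Ioo c b, w b ≤ Real.exp (∫ x in s..b, lam x) * w s := by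
        intro s hs
        exact gron_pos w w' lam s b hs.2.le
          (hcont.mono (Set.Icc_subset_Icc (hcIcc.1.trans hs.1.le) le_rfl))
          (hposIoo s hs)
          (fun x hx => hd x ⟨hcIcc.1.trans_lt (hs.1.trans hx.1), hx.2⟩)
          (fun x hx => hf x ⟨hcIcc.1.trans_lt (hs.1.trans hx.1), hx.2⟩) (hint' s b)
      have hcontInt : Continuous fun s => ∫ x in s..b, lam x := by
        have h := (intervalIntegral.continuous_primitive
          (fun a b => hint' a b) b).neg
        simp only [intervalIntegral.integral_symm b]; exact h
      have htw : Tendsto w (𝓝[Set.Ioo c b] c) (𝓝 0) := by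
        have hsub : Set.Ioo c b ⊆ Set.Icc a b :=
          fun x hx => ⟨hcIcc.1.trans hx.1.le, hx.2.le⟩
        have := (hcont c hcIcc).mono hsub
        rw [ContinuousWithinAt, hwc] at this
        exact this
      have htend : Tendsto (fun s => Real.exp (∫ x in s..b, lam x) * w s)
          (𝓝[Set.Ioo c b] c) (𝓝 0) := by
        have h1 : Tendsto (fun s => Real.exp (∫ x in s..b, lam x))
            (𝓝[Set.Ioo c b] c) (𝓝 (Real.exp (∫ x in c..b, lam x))) :=
          ((Real.continuous_exp.comp hcontInt).tendsto c).mono_left nhdsWithin_le_nhds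
        simpa using h1.mul htw
      have hnb : (𝓝[Set.Ioo c b] c).NeBot := by
        rw [nhdsWithin_Ioo_eq_nhdsGT hcb]
        infer_instance
      have hwb : w b ≤ 0 :=
        ge_of_tendsto htend (Filter.eventually_of_mem self_mem_nhdsWithin
          (fun s hs => hbound s hs))
      exact hwb.trans hRHS

theorem stmt18 (w w' lam : ℝ → ℝ) (t₀ : ℝ) (τ : ℕ → ℝ) (r wl : ℕ → ℝ)
    (hw0 : ∀ t, t₀ ≤ t → 0 ≤ w t)
    (htmono : StrictMono τ)
    (htinf : Tendsto τ atTop atTop)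
    (hr : ∀ k, 0 < r k)
    (hrc : ∀ t, ContinuousWithinAt w (Set.Ici t) t)
    (hderiv : ∀ t, t₀ ≤ t → t ∉ Set.range τ → HasDerivAt w (w' t) t)
    (hflow : ∀ t, t₀ ≤ t → t ∉ Set.range τ → w' t ≤ lam t * w t)
    (hwl : ∀ k, Tendsto w (nhdsWithin (τ k) (Set.Iio (τ k))) (nhds (wl k)))
    (hjump : ∀ k, t₀ < τ k → w (τ k) ≤ r k * wl k)
    (hlamint : ∀ t, IntervalIntegrable lam volume t₀ t) :
    ∀ t, t₀ ≤ t →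
      w t ≤ (∏ᶠ (k : ℕ) (_ : τ k ∈ Set.Ioc t₀ t), r k) *
        Real.exp (∫ s in t₀..t, lam s) * w t₀ := by
  classical
  intro t ht
  have hint' : ∀ a b : ℝ, IntervalIntegrable lam volume a b := fun a b =>
    (hlamint a).symm.trans (hlamint b)
  have hex : ∀ s : ℝ, ∃ k, s < τ k := fun s =>
    (htinf.eventually (eventually_gt_atTop s)).exists
  set N : ℝ → ℕ := fun s => Nat.find (hex s) with hNdef
  have hNle : ∀ s k, N s ≤ k ↔ s < τ k := by
    intro s k
    constructor
    · intro h
      exact lt_of_lt_of_le (Nat.find_spec (hex s)) (htmono.monotone h)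
    · intro h
      exact Nat.find_min' (hex s) h
  have hNgt : ∀ s k, k < N s ↔ τ k ≤ s := by
    intro s k
    rw [← not_le, hNle, not_lt]
  have key : ∀ j : ℕ, ∀ u, t₀ ≤ u → N u ≤ N t₀ + j →
      w u ≤ (∏ k ∈ Finset.Ico (N t₀) (N u), r k) *
        Real.exp (∫ s in t₀..u, lam s) * w t₀ := by
    intro j
    induction j with
    | zero =>
      intro u hu hNu
      have hNlow : N t₀ ≤ N u := (hNle t₀ (N u)).2 (lt_of_le_of_lt hu (Nat.find_spec (hex u)))
      have hNu' : N u = N t₀ := le_antisymm (by simpa using hNu) hNlow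
      rw [hNu', Finset.Ico_self, Finset.prod_empty, one_mul]
      have hne : ∀ s ∈ Set.Ioc t₀ u, s ∉ Set.range τ := by
        rintro s hs ⟨k, rfl⟩
        have h1 : k < N u := (hNgt u k).2 hs.2
        rw [hNu'] at h1
        have h2 : τ k ≤ t₀ := (hNgt t₀ k).1 h1
        exact absurd hs.1 (not_lt.2 h2)
      exact gronA w w' lam t₀ τ hw0 hrc hderiv hflow hint' t₀ u le_rfl hu hne
    | succ j ih =>
      intro u hu hNu
      by_cases hc : N u ≤ N t₀ + j
      · exact ih u hu hc
      push_neg at hc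
      set K := N t₀ + j with hK
      have hKN : N u = K + 1 := le_antisymm hNu hc
      have hNt₀K : N t₀ ≤ K := Nat.le_add_right _ _
      have hτK_gt : t₀ < τ K := by
        by_contra h
        push_neg at h
        have : K < N t₀ := (hNgt t₀ K).2 h
        omega
      have hτK_le : τ K ≤ u := (hNgt u K).1 (by omega)
      -- Step 1: no events in (τ K, u]
      have step1 : w u ≤ Real.exp (∫ s in τ K..u, lam s) * w (τ K) := by
        apply gronA w w' lam t₀ τ hw0 hrc hderiv hflow hint' (τ K) u hτK_gt.le hτK_le
        rintro s hs ⟨k, rfl⟩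
        have h1 : K < k := htmono.lt_iff_lt.1 hs.1
        have h2 : N u ≤ k := by omega
        have h3 : u < τ k := (hNle u k).1 h2
        exact absurd hs.2 (not_le.2 h3)
      -- Step 3: bound on wl K
      set P := ∏ k ∈ Finset.Ico (N t₀) K, r k with hP
      have hP0 : 0 ≤ P := Finset.prod_nonneg fun k _ => (hr k).le
      have step3 : wl K ≤ P * Real.exp (∫ s in t₀..τ K, lam s) * w t₀ := by
        set L := if K = 0 then t₀ else max t₀ (τ (K - 1)) with hL
        have hLt₀ : t₀ ≤ L := by
          rw [hL]; split
          · exact le_rfl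
          · exact le_max_left _ _
        have hLlt : L < τ K := by
          rw [hL]; split
          · exact hτK_gt
          · rename_i h
            exact max_lt hτK_gt (htmono (by omega))
        have hev : ∀ s ∈ Set.Ioo L (τ K),
            w s ≤ P * Real.exp (∫ x in t₀..s, lam x) * w t₀ := by
          intro s hs
          have hts : t₀ ≤ s := hLt₀.trans hs.1.le
          have hNs : N s = K := by
            apply le_antisymm ((hNle s K).2 hs.2)
            by_cases h0 : K = 0
            · omega
            · have hτs : τ (K - 1) ≤ s := by
                have : τ (K - 1) ≤ L := by rw [hL]; simp [h0]
                exact this.trans hs.1.le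
              have := (hNgt s (K - 1)).2 hτs
              omega
          have := ih s hts (by omega)
          rwa [hNs] at this
        have htendR : Tendsto (fun s => P * Real.exp (∫ x in t₀..s, lam x) * w t₀)
            (𝓝[<] τ K) (𝓝 (P * Real.exp (∫ x in t₀..τ K, lam x) * w t₀)) := by
          have hc : Continuous fun s => P * Real.exp (∫ x in t₀..s, lam x) * w t₀ :=
            ((continuous_const.mul (Real.continuous_exp.comp
              (intervalIntegral.continuous_primitive (fun a b => hint' a b) t₀))).mul
              continuous_const)
          exact (hc.tendsto _).mono_left nhdsWithin_le_nhds
        refine le_of_tendsto_of_tendsto (hwl K) htendR ?_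
        exact Filter.eventually_of_mem (Ioo_mem_nhdsLT_of_mem ⟨hLlt, le_rfl⟩) hev
      -- Combine
      have hjK := hjump K hτK_gt
      have hexp1 : (0:ℝ) ≤ Real.exp (∫ s in τ K..u, lam s) := (Real.exp_pos _).le
      calc w u ≤ Real.exp (∫ s in τ K..u, lam s) * w (τ K) := step1
        _ ≤ Real.exp (∫ s in τ K..u, lam s) * (r K * wl K) :=
            mul_le_mul_of_nonneg_left hjK hexp1
        _ ≤ Real.exp (∫ s in τ K..u, lam s) *
              (r K * (P * Real.exp (∫ s in t₀..τ K, lam s) * w t₀)) := by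
            apply mul_le_mul_of_nonneg_left _ hexp1
            exact mul_le_mul_of_nonneg_left step3 (hr K).le
        _ = (∏ k ∈ Finset.Ico (N t₀) (N u), r k) *
              Real.exp (∫ s in t₀..u, lam s) * w t₀ := by
            rw [hKN, Finset.prod_Ico_succ_top hNt₀K,
              ← intervalIntegral.integral_add_adjacent_intervals
                (hlamint (τ K)) (hint' (τ K) u), Real.exp_add]
            ring
  have hfp : (∏ᶠ (k : ℕ) (_ : τ k ∈ Set.Ioc t₀ t), r k) =
      ∏ k ∈ Finset.Ico (N t₀) (N t), r k := by
    apply finprod_cond_eq_prod_of_cond_iff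
    intro k _
    rw [Finset.mem_Ico, Set.mem_Ioc]
    constructor
    · rintro ⟨h1, h2⟩
      exact ⟨(hNle t₀ k).2 h1, (hNgt t k).2 h2⟩
    · rintro ⟨h1, h2⟩
      exact ⟨(hNle t₀ k).1 h1, (hNgt t k).1 h2⟩
  rw [hfp]
  exact key (N t) t ht (by omega)
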